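/- Let F be a field with char F ≠ 2 and let e₃ = (0,0,1,0,0) ∈ F⁵. For g ∈ G the following are equivalent: (i) g·e₃ = e₃; (ii) g₃₃ = 1, g_{i3} = 0 for all i ≠ 3, g_{3j} = 0 for all j ≠ 3, and the 4×4 matrix m obtained from g by deleting the third row and third column satisfies ᵗm·J₄·m = J₄ and det m = 1, where J₄ is the 4×4 matrix with 1's on the antidiagonal and 0's elsewhere. Moreover, Q(g·e₃, g·e₃) = 1 for every g ∈ G, so g ↦ g·e₃ maps G into the sphere {v ∈ F⁵ : Q(v,v) = 1}. -/

import Mathlib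

open Matrix

/-- for `g ∈ G = SO(3,2;F)`, stabilizing `e₃` is equivalent to being of
block shape `diag(1-block at (3,3))` with the complementary 4×4 block in `SO(J₄)`;
moreover `g·e₃` always lies on the sphere `Q(v,v) = 1`. -/
theorem stmt_2 {F : Type*} [Field F] (h2 : (2 : F) ≠ 0)
    (J : Matrix (Fin 5) (Fin 5) F)
    (hJ : ∀ i j : Fin 5, J i j = if (i : ℕ) + (j : ℕ) = 4 then 1 else 0)
    (J4 : Matrix (Fin 4) (Fin 4) F)
    (hJ4 : ∀ i j : Fin 4, J4 i j = if (i : ℕ) + (j : ℕ) = 3 then 1 else 0)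
    (e3 : Fin 5 → F) (he3 : e3 = ![0,0,1,0,0])
    (g : Matrix (Fin 5) (Fin 5) F) (hg : gᵀ * J * g = J) (hgdet : g.det = 1) :
    (g.mulVec e3 = e3 ↔
      (g 2 2 = 1 ∧ (∀ i : Fin 5, i ≠ 2 → g i 2 = 0) ∧ (∀ j : Fin 5, j ≠ 2 → g 2 j = 0)
        ∧ (g.submatrix (Fin.succAbove 2) (Fin.succAbove 2))ᵀ * J4
            * g.submatrix (Fin.succAbove 2) (Fin.succAbove 2) = J4
        ∧ (g.submatrix (Fin.succAbove 2) (Fin.succAbove 2)).det = 1))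
    ∧ 2 * g.mulVec e3 0 * g.mulVec e3 4 + 2 * g.mulVec e3 1 * g.mulVec e3 3
        + (g.mulVec e3 2) ^ 2 = 1 := by
  have v0 : ((0:Fin 5):ℕ) = 0 := rfl
  have v1 : ((1:Fin 5):ℕ) = 1 := rfl
  have v2 : ((2:Fin 5):ℕ) = 2 := rfl
  have v3 : ((3:Fin 5):ℕ) = 3 := rfl
  have v4 : ((4:Fin 5):ℕ) = 4 := rfl
  have w0 : ((0:Fin 4):ℕ) = 0 := rfl
  have w1 : ((1:Fin 4):ℕ) = 1 := rfl
  have w2 : ((2:Fin 4):ℕ) = 2 := rfl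
  have w3 : ((3:Fin 4):ℕ) = 3 := rfl
  have hcol : ∀ i, g.mulVec e3 i = g i 2 := by
    intro i
    simp [Matrix.mulVec, dotProduct, he3, Fin.sum_univ_five]
  have E : ∀ p q : Fin 5, g 0 p * g 4 q + g 1 p * g 3 q + g 2 p * g 2 q + g 3 p * g 1 q
      + g 4 p * g 0 q = if (p : ℕ) + (q : ℕ) = 4 then 1 else 0 := by
    intro p q
    have h := congrFun (congrFun hg p) q
    rw [hJ p q] at h
    simp [Matrix.mul_apply, hJ, Fin.sum_univ_five, v3, v4] at h
    linear_combination h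
  have hsub : g.submatrix (Fin.succAbove 2) (Fin.succAbove 2) =
      !![g 0 0, g 0 1, g 0 3, g 0 4;
         g 1 0, g 1 1, g 1 3, g 1 4;
         g 3 0, g 3 1, g 3 3, g 3 4;
         g 4 0, g 4 1, g 4 3, g 4 4] := by
    ext a b
    fin_cases a <;> fin_cases b <;> rfl
  constructor
  · constructor
    · intro hfix
      have c : ∀ i, g i 2 = e3 i := fun i => (hcol i).symm.trans (congrFun hfix i)
      have c0 : g 0 2 = 0 := by rw [c]; simp [he3]
      have c1 : g 1 2 = 0 := by rw [c]; simp [he3]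
      have c2 : g 2 2 = 1 := by rw [c]; simp [he3]
      have c3 : g 3 2 = 0 := by rw [c]; simp [he3]
      have c4 : g 4 2 = 0 := by rw [c]; simp [he3]
      have r0 : g 2 0 = 0 := by
        have h := E 0 2; norm_num [v0, v1, v2, v3, v4, c0, c1, c2, c3, c4] at h; linear_combination h
      have r1 : g 2 1 = 0 := by
        have h := E 1 2; norm_num [v0, v1, v2, v3, v4, c0, c1, c2, c3, c4] at h; linear_combination h
      have r3 : g 2 3 = 0 := by
        have h := E 3 2; norm_num [v0, v1, v2, v3, v4, c0, c1, c2, c3, c4] at h; linear_combination h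
      have r4 : g 2 4 = 0 := by
        have h := E 4 2; norm_num [v0, v1, v2, v3, v4, c0, c1, c2, c3, c4] at h; linear_combination h
      refine ⟨c2, ?_, ?_, ?_, ?_⟩
      · intro i hi
        fin_cases i
        · exact c0
        · exact c1
        · exact absurd rfl hi
        · exact c3
        · exact c4
      · intro j hj
        fin_cases j
        · exact r0
        · exact r1
        · exact absurd rfl hj
        · exact r3
        · exact r4
      · rw [hsub]
        ext k l
        fin_cases k <;> fin_cases l <;>
          simp only [Matrix.mul_apply, Matrix.transpose_apply, Fin.sum_univ_four, hJ4,
            Matrix.cons_val', Matrix.cons_val_zero, Matrix.cons_val_one, Matrix.head_cons,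
            Matrix.cons_val_fin_one, Matrix.empty_val', Matrix.head_fin_const,
            Matrix.cons_val_two, Matrix.cons_val_three, Matrix.tail_cons] <;>
          norm_num [v0, v1, v2, v3, v4, w0, w1, w2, w3, Matrix.cons_val_two, Matrix.cons_val_three, Matrix.vecHead, Matrix.vecTail]
        · have h := E 0 0
          norm_num [v0, v1, v2, v3, v4] at h
          linear_combination h - g 2 0 * r0
        · have h := E 0 1
          norm_num [v0, v1, v2, v3, v4] at h
          linear_combination h - g 2 1 * r0
        · have h := E 0 3
          norm_num [v0, v1, v2, v3, v4] at h
          linear_combination h - g 2 3 * r0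
        · have h := E 0 4
          norm_num [v0, v1, v2, v3, v4] at h
          linear_combination h - g 2 4 * r0
        · have h := E 1 0
          norm_num [v0, v1, v2, v3, v4] at h
          linear_combination h - g 2 0 * r1
        · have h := E 1 1
          norm_num [v0, v1, v2, v3, v4] at h
          linear_combination h - g 2 1 * r1
        · have h := E 1 3
          norm_num [v0, v1, v2, v3, v4] at h
          linear_combination h - g 2 3 * r1
        · have h := E 1 4
          norm_num [v0, v1, v2, v3, v4] at h
          linear_combination h - g 2 4 * r1
        · have h := E 3 0
          norm_num [v0, v1, v2, v3, v4] at h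
          linear_combination h - g 2 0 * r3
        · have h := E 3 1
          norm_num [v0, v1, v2, v3, v4] at h
          linear_combination h - g 2 1 * r3
        · have h := E 3 3
          norm_num [v0, v1, v2, v3, v4] at h
          linear_combination h - g 2 3 * r3
        · have h := E 3 4
          norm_num [v0, v1, v2, v3, v4] at h
          linear_combination h - g 2 4 * r3
        · have h := E 4 0
          norm_num [v0, v1, v2, v3, v4] at h
          linear_combination h - g 2 0 * r4
        · have h := E 4 1
          norm_num [v0, v1, v2, v3, v4] at h
          linear_combination h - g 2 1 * r4
        · have h := E 4 3
          norm_num [v0, v1, v2, v3, v4] at h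
          linear_combination h - g 2 3 * r4
        · have h := E 4 4
          norm_num [v0, v1, v2, v3, v4] at h
          linear_combination h - g 2 4 * r4
      · have hd := Matrix.det_succ_column g 2
        rw [Fin.sum_univ_five] at hd
        norm_num [v0, v1, v2, v3, v4, c0, c1, c2, c3, c4] at hd
        rw [← hd, hgdet]
    · rintro ⟨h22, hc, -, -, -⟩
      funext i
      rw [hcol]
      fin_cases i
      · simpa [he3] using hc 0 (by decide)
      · simpa [he3] using hc 1 (by decide)
      · simpa [he3] using h22
      · simpa [he3] using hc 3 (by decide)
      · simpa [he3] using hc 4 (by decide)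
  · simp only [hcol]
    have h := E 2 2
    norm_num [v2] at h
    linear_combination h
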